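/- Let x ∈ A^ℤ be a non-periodic Toeplitz word with period structure (p_l). For every l₁ ∈ ℕ there exists l₂ ∈ ℕ such that whenever x[j₁, j₁ + p_{l₂} − 1] = x[j₂, j₂ + p_{l₂} − 1] (the two finite subwords of length p_{l₂} coincide), then j₁ ≡ j₂ (mod p_{l₁}). That is, every sufficiently long word occurs in x only in a single residue class modulo p_{l₁}. -/

import Mathlib

/-- Unique residue class lemma: for a non-periodic Toeplitz word with period structure
(p_l), for every l₁ there is l₂ such that any two occurrences of a word of length
p_{l₂} lie in the same residue class modulo p_{l₁}. -/
theorem unique_residue_class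
    {A : Type*} [Fintype A] (x : ℤ → A) (p : ℕ → ℕ)
    (hpos : ∀ l, 0 < p l) (hdvd : ∀ l, p l ∣ p (l + 1))
    (hcover : ∀ j : ℤ, ∃ l, ∀ n : ℤ, x (j + n * (p l : ℤ)) = x j)
    (hess : ∀ l, ({j : ℤ | ∀ n : ℤ, x (j + n * (p l : ℤ)) = x j}).Nonempty ∧
      ∀ q : ℕ, 0 < q → q < p l →
        {j : ℤ | ∀ n : ℤ, x (j + n * (p l : ℤ)) = x j} ≠
          {j : ℤ | ∀ n : ℤ, x (j + n * (q : ℤ)) = x j})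
    (hnp : ¬ ∃ q : ℕ, 0 < q ∧ ∀ j : ℤ, x (j + (q : ℤ)) = x j) :
    ∀ l₁ : ℕ, ∃ l₂ : ℕ, ∀ j₁ j₂ : ℤ,
      (∀ i : ℤ, 0 ≤ i → i < (p l₂ : ℤ) → x (j₁ + i) = x (j₂ + i)) →
      (p l₁ : ℤ) ∣ (j₁ - j₂) := by
  classical
  intro l₁
  set P : ℤ := (p l₁ : ℤ) with hPdef
  have hPpos : 0 < P := by rw [hPdef]; exact_mod_cast hpos l₁
  have hmono : ∀ a b : ℕ, a ≤ b → p a ∣ p b := by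
    intro a b hab
    induction b, hab using Nat.le_induction with
    | base => exact dvd_rfl
    | succ b hb ih => exact ih.trans (hdvd b)
  set Good : ℤ → Prop := fun j => ∀ n : ℤ, x (j + n * P) = x j with hGood
  have good_shift : ∀ j t : ℤ, Good j → Good (j + t * P) := by
    intro j t hj n
    have h1 := hj (t + n)
    have h2 := hj t
    have e1 : j + t * P + n * P = j + (t + n) * P := by ring
    rw [e1, h1, ← h2]
  have hcover' : ∀ j : ℤ, ∀ l : ℕ, ∃ m, l ≤ m ∧ ∀ n : ℤ, x (j + n * (p m : ℤ)) = x j := by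
    intro j l
    obtain ⟨l₀, h⟩ := hcover j
    obtain ⟨c, hc⟩ := hmono l₀ (max l₀ l) (le_max_left _ _)
    refine ⟨max l₀ l, le_max_right _ _, fun n => ?_⟩
    have hc' : (p (max l₀ l) : ℤ) = (p l₀ : ℤ) * c := by exact_mod_cast hc
    have e1 : j + n * ((p l₀ : ℤ) * c) = j + (n * c) * (p l₀ : ℤ) := by ring
    rw [hc', e1]
    exact h (n * c)
  have bd : ∀ c : ℤ, ∃ m : ℕ, l₁ ≤ m ∧ (¬ Good c → ∃ c₁ t : ℤ, c₁ = c + t * P ∧ x c₁ ≠ x c ∧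
      (∀ k : ℤ, x (c + k * (p m : ℤ)) = x c) ∧ (∀ k : ℤ, x (c₁ + k * (p m : ℤ)) = x c₁)) := by
    intro c
    by_cases hc : Good c
    · exact ⟨l₁, le_rfl, fun h => absurd hc h⟩
    · obtain ⟨n₀, hn₀⟩ : ∃ n₀ : ℤ, x (c + n₀ * P) ≠ x c := by
        by_contra h; push_neg at h; exact hc h
      obtain ⟨m₀, hm₀l, hm₀⟩ := hcover' c l₁
      obtain ⟨m, hmm₀, hm⟩ := hcover' (c + n₀ * P) m₀
      obtain ⟨e, he⟩ := hmono m₀ m hmm₀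
      refine ⟨m, hm₀l.trans hmm₀, fun _ => ⟨c + n₀ * P, n₀, rfl, hn₀, fun k => ?_, hm⟩⟩
      have he' : (p m : ℤ) = (p m₀ : ℤ) * e := by exact_mod_cast he
      have e1 : c + k * ((p m₀ : ℤ) * e) = c + (k * e) * (p m₀ : ℤ) := by ring
      rw [he', e1]
      exact hm₀ (k * e)
  choose F hF1 hF2 using bd
  set M : ℕ := max l₁ ((Finset.range (p l₁)).sup fun r : ℕ => F (r : ℤ)) with hMdef
  have hl₁M : l₁ ≤ M := le_max_left _ _
  obtain ⟨K, hK⟩ := hmono l₁ M hl₁M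
  have hMpos : 0 < p M := hpos M
  have hKpos : 0 < K := by
    rcases Nat.eq_zero_or_pos K with h | h
    · exfalso; rw [h, Nat.mul_zero] at hK; omega
    · exact h
  have hKP : (K : ℤ) * P = (p M : ℤ) := by
    rw [hPdef]; exact_mod_cast (by rw [hK]; ring : K * p l₁ = p M)
  refine ⟨M, ?_⟩
  intro j₁ j₂ hwin
  -- the key "stretch" lemma
  have stretch : ∀ c' : ℤ, (∀ n' : ℕ, n' < K → x (c' + (n' : ℤ) * P) = x c') → Good c' := by
    intro c' hstr
    by_contra hbad
    set r : ℤ := c' % P with hr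
    have hr0 : 0 ≤ r := Int.emod_nonneg _ (ne_of_gt hPpos)
    have hrP : r < P := Int.emod_lt_of_pos _ hPpos
    have hc' : c' = r + (c' / P) * P := by
      have h := Int.emod_add_mul_ediv c' P
      rw [hr]; linarith
    have hbadr : ¬ Good r := by
      intro hg
      exact hbad (by rw [hc']; exact good_shift r (c' / P) hg)
    obtain ⟨c₁, t₀, hc₁, hne, hper0, hper1⟩ := hF2 r hbadr
    set m := F r with hm
    have hrm : l₁ ≤ m := hF1 r
    have hmM : m ≤ M := by
      have hrnat : r.toNat < p l₁ := by
        have : r < (p l₁ : ℤ) := hrP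
        omega
      have hle : F ((r.toNat : ℕ) : ℤ) ≤ (Finset.range (p l₁)).sup (fun r : ℕ => F (r : ℤ)) :=
        Finset.le_sup (f := fun r : ℕ => F (r : ℤ)) (Finset.mem_range.mpr hrnat)
      rw [Int.toNat_of_nonneg hr0] at hle
      exact le_trans hle (le_max_right _ _)
    obtain ⟨Q, hQ⟩ := hmono l₁ m hrm
    have hQpos : 0 < Q := by
      rcases Nat.eq_zero_or_pos Q with h | h
      · exfalso; rw [h, Nat.mul_zero] at hQ; have := hpos m; omega
      · exact h
    have hQK : Q ≤ K := by
      have h1 : p m ∣ p M := hmono m M hmM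
      have h2 : p m ≤ p M := Nat.le_of_dvd hMpos h1
      have h3 : p l₁ * Q ≤ p l₁ * K := by rw [← hQ, ← hK]; exact h2
      exact Nat.le_of_mul_le_mul_left h3 (hpos l₁)
    have hQP : (Q : ℤ) * P = (p m : ℤ) := by
      rw [hPdef]; exact_mod_cast (by rw [hQ]; ring : Q * p l₁ = p m)
    have key : ∀ c0 s : ℤ, c' = c0 + s * P → (∀ k : ℤ, x (c0 + k * (p m : ℤ)) = x c0) →
        x c' = x c0 := by
      intro c0 s hs hper
      set n' : ℤ := (-s) % (Q : ℤ) with hn'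
      have hQZ : (0 : ℤ) < (Q : ℤ) := by exact_mod_cast hQpos
      have hn'0 : 0 ≤ n' := Int.emod_nonneg _ (ne_of_gt hQZ)
      have hn'Q : n' < (Q : ℤ) := Int.emod_lt_of_pos _ hQZ
      have hw : s + n' = (Q : ℤ) * (-((-s) / (Q : ℤ))) := by
        have h := Int.emod_add_mul_ediv (-s) (Q : ℤ)
        rw [hn']; linarith
      have hstr' : x (c' + n' * P) = x c' := by
        have h1 : n'.toNat < K := by
          have : n' < (K : ℤ) := lt_of_lt_of_le hn'Q (by exact_mod_cast hQK)
          omega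
        have h2 := hstr n'.toNat h1
        rwa [Int.toNat_of_nonneg hn'0] at h2
      have harg : c' + n' * P = c0 + (-((-s) / (Q : ℤ))) * (p m : ℤ) := by
        rw [hs, ← hQP]
        have : s * P + n' * P = (s + n') * P := by ring
        rw [add_assoc, this, hw]; ring
      rw [harg, hper _] at hstr'
      exact hstr'.symm
    have hxr : x c' = x r := key r (c' / P) hc' hper0
    have hxc₁ : x c' = x c₁ := by
      refine key c₁ (c' / P - t₀) ?_ hper1
      rw [hc₁]; linear_combination hc'
    exact hne (hxc₁ ▸ hxr ▸ rfl)
  -- transfer lemma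
  have transfer : ∀ a b : ℤ, (∀ i : ℤ, 0 ≤ i → i < (p M : ℤ) → x (a + i) = x (b + i)) →
      ∀ j : ℤ, Good j → Good (j + (a - b)) ∧ x (j + (a - b)) = x j := by
    intro a b hw j hj
    set i : ℤ := (j - b) % P with hi
    have hi0 : 0 ≤ i := Int.emod_nonneg _ (ne_of_gt hPpos)
    have hiP : i < P := Int.emod_lt_of_pos _ hPpos
    set k : ℤ := (j - b) / P with hk
    have hjbi : j = (b + i) + k * P := by
      have h := Int.emod_add_mul_ediv (j - b) P
      rw [hi, hk]; linarith
    have hgbi : Good (b + i) := by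
      have := good_shift j (-k) hj
      have e1 : j + (-k) * P = b + i := by rw [hjbi]; ring
      rwa [e1] at this
    -- window bounds helper
    have hbound : ∀ n' : ℕ, n' < K → 0 ≤ i + (n' : ℤ) * P ∧ i + (n' : ℤ) * P < (p M : ℤ) := by
      intro n' hn'
      constructor
      · positivity
      · have h0 : (n' : ℤ) < (K : ℤ) := by exact_mod_cast hn'
        have h1 : (n' : ℤ) ≤ (K : ℤ) - 1 := by omega
        have h2 : (n' : ℤ) * P ≤ ((K : ℤ) - 1) * P :=
          mul_le_mul_of_nonneg_right h1 (le_of_lt hPpos)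
        have : i + (n' : ℤ) * P < (K : ℤ) * P := by nlinarith
        rwa [hKP] at this
      -- done
    have hgai : Good (a + i) := by
      apply stretch
      intro n' hn'
      obtain ⟨hb1, hb2⟩ := hbound n' hn'
      have e1 : a + i + (n' : ℤ) * P = a + (i + (n' : ℤ) * P) := by ring
      have e2 : b + i + (n' : ℤ) * P = b + (i + (n' : ℤ) * P) := by ring
      have h1 : x (a + (i + (n' : ℤ) * P)) = x (b + (i + (n' : ℤ) * P)) := hw _ hb1 hb2
      have h2 : x (b + i + (n' : ℤ) * P) = x (b + i) := hgbi n'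
      have h3 : x (a + i) = x (b + i) := hw i hi0 (lt_of_lt_of_le hiP (by
        rw [← hKP]; nlinarith [ (by exact_mod_cast hKpos : (0:ℤ) < (K:ℤ)) ]))
      rw [e1, h1, ← e2, h2, h3]
    have hgoal : Good (j + (a - b)) := by
      have := good_shift (a + i) k hgai
      have e1 : a + i + k * P = j + (a - b) := by rw [hjbi]; ring
      rwa [e1] at this
    refine ⟨hgoal, ?_⟩
    have h3 : x (a + i) = x (b + i) := hw i hi0 (lt_of_lt_of_le hiP (by
      rw [← hKP]; nlinarith [ (by exact_mod_cast hKpos : (0:ℤ) < (K:ℤ)) ]))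
    have h4 : x (j + (a - b)) = x (a + i) := by
      have := hgai k
      have e1 : a + i + k * P = j + (a - b) := by rw [hjbi]; ring
      rw [e1] at this; exact this
    have h5 : x j = x (b + i) := by
      have := hgbi k
      have e1 : b + i + k * P = j := hjbi.symm
      rw [e1] at this; exact this
    rw [h4, h3, ← h5]
  set d : ℤ := j₁ - j₂ with hd
  have hwin' : ∀ i : ℤ, 0 ≤ i → i < (p M : ℤ) → x (j₂ + i) = x (j₁ + i) :=
    fun i h1 h2 => (hwin i h1 h2).symm
  have iter : ∀ j : ℤ, Good j → ∀ u : ℤ, Good (j + u * d) ∧ x (j + u * d) = x j := by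
    intro j hj u
    induction u using Int.induction_on with
    | zero => constructor <;> simpa using hj
    | succ u ih =>
        obtain ⟨hg, hv⟩ := ih
        have h1 := transfer j₁ j₂ hwin _ hg
        have e1 : j + u * d + (j₁ - j₂) = j + ((u : ℤ) + 1) * d := by rw [hd]; ring
        rw [e1] at h1
        exact ⟨h1.1, h1.2.trans hv⟩
    | pred u ih =>
        obtain ⟨hg, hv⟩ := ih
        have h1 := transfer j₂ j₁ hwin' _ hg
        have e1 : j + (-(u : ℤ)) * d + (j₂ - j₁) = j + (-(u : ℤ) - 1) * d := by rw [hd]; ring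
        rw [e1] at h1
        exact ⟨h1.1, h1.2.trans hv⟩
  by_contra hnd
  set g : ℕ := Int.gcd d P with hg
  have hgP : (g : ℤ) ∣ P := Int.gcd_dvd_right _ _
  have hgd : (g : ℤ) ∣ d := Int.gcd_dvd_left _ _
  have hgpos : 0 < g := by
    rcases Nat.eq_zero_or_pos g with h | h
    · exfalso
      have := Int.gcd_eq_zero_iff.mp h
      exact absurd this.2 (ne_of_gt hPpos)
    · exact h
  have hglt : g < p l₁ := by
    have hle : (g : ℤ) ≤ P := Int.le_of_dvd hPpos hgP
    have hne : (g : ℤ) ≠ P := by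
      intro h
      exact hnd (by rw [hd] at hgd ⊢; rw [← h] at *; exact (h ▸ hgd : _))
    have : (g : ℤ) < P := lt_of_le_of_ne hle hne
    rw [hPdef] at this
    exact_mod_cast this
  refine (hess l₁).2 g hgpos hglt ?_
  ext j
  simp only [Set.mem_setOf_eq]
  constructor
  · intro hj n
    have hbez : (g : ℤ) = d * Int.gcdA d P + P * Int.gcdB d P := Int.gcd_eq_gcd_ab d P
    set a := Int.gcdA d P
    set b := Int.gcdB d P
    have h1 := (iter j hj (n * a)).1
    have h2 := (iter j hj (n * a)).2
    have e1 : j + n * (g : ℤ) = (j + (n * a) * d) + (n * b) * P := by rw [hbez]; ring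
    rw [e1, h1 (n * b), h2]
  · intro hj n
    obtain ⟨e, he⟩ := hgP
    have e1 : j + n * P = j + (n * e) * (g : ℤ) := by rw [he]; ring
    rw [e1]
    exact hj (n * e)
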